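/- arXiv:hep-th/9902044 — 2 statements merged into one kernel-verified Lean document; each statement's English description precedes it below -/
import Mathlib

section
/- There is no value of t at which the conformal weights of three pairwise distinct tuples π_1, π_2, π_3 intersect simultaneously: if Δ_{r_{π_1},s_{π_1}}(t) = Δ_{r_{π_2},s_{π_2}}(t) = Δ_{r_{π_3},s_{π_3}}(t) with π_1 ≠ π_2 and π_2 ≠ π_3, then π_1 = π_3. -/
lemma prod_pow_factorization_apply {P : ℕ} (p : Fin P → ℕ) (hp : ∀ i, (p i).Prime)
    (hinj : Function.Injective p) (c : Fin P → ℕ) (j : Fin P) :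
    (∏ i, p i ^ c i).factorization (p j) = c j := by
  rw [Nat.factorization_prod (fun i _ => pow_ne_zero _ (hp i).pos.ne')]
  rw [Finsupp.finset_sum_apply]
  rw [Finset.sum_eq_single j]
  · rw [Nat.Prime.factorization_pow (hp j), Finsupp.single_apply, if_pos rfl]
  · intro i _ hij
    rw [Nat.Prime.factorization_pow (hp i), Finsupp.single_apply,
      if_neg (fun h => hij (hinj h))]
  · intro h; exact absurd (Finset.mem_univ j) h

lemma prod_pow_inj {P : ℕ} (p : Fin P → ℕ) (hp : ∀ i, (p i).Prime)
    (hinj : Function.Injective p) {a b : Fin P → ℕ}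
    (hab : (∏ i, p i ^ a i) = (∏ i, p i ^ b i)) : a = b := by
  funext j
  have := congrArg (fun m => m.factorization (p j)) hab
  simpa [prod_pow_factorization_apply p hp hinj] using this

/-- The conformal weights of three pairwise distinct tuples never intersect
simultaneously: if `Δ_{π₁}(t) = Δ_{π₂}(t) = Δ_{π₃}(t)` with `π₁ ≠ π₂` and
`π₂ ≠ π₃`, then `π₁ = π₃`. -/
theorem stmt_4 (n P : ℕ) (p e : Fin P → ℕ)
    (hn : 1 ≤ n)
    (hp : ∀ i, (p i).Prime) (hodd : ∀ i, Odd (p i))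
    (hinj : Function.Injective p)
    (k1 k2 k3 : Fin P → ℕ)
    (hk1 : ∀ i, k1 i ≤ e i) (hk2 : ∀ i, k2 i ≤ e i) (hk3 : ∀ i, k3 i ≤ e i)
    (h12 : k1 ≠ k2) (h23 : k2 ≠ k3)
    (t : ℝ) (ht : t ≠ 0)
    (hΔ12 : -(((2 ^ n * ∏ i, p i ^ k1 i : ℕ) : ℝ) * t
        + ((∏ i, p i ^ (e i - k1 i) : ℕ) : ℝ)) ^ 2 / (8 * t) + t / 8 + 1 / 8
      = -(((2 ^ n * ∏ i, p i ^ k2 i : ℕ) : ℝ) * t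
        + ((∏ i, p i ^ (e i - k2 i) : ℕ) : ℝ)) ^ 2 / (8 * t) + t / 8 + 1 / 8)
    (hΔ23 : -(((2 ^ n * ∏ i, p i ^ k2 i : ℕ) : ℝ) * t
        + ((∏ i, p i ^ (e i - k2 i) : ℕ) : ℝ)) ^ 2 / (8 * t) + t / 8 + 1 / 8
      = -(((2 ^ n * ∏ i, p i ^ k3 i : ℕ) : ℝ) * t
        + ((∏ i, p i ^ (e i - k3 i) : ℕ) : ℝ)) ^ 2 / (8 * t) + t / 8 + 1 / 8) :
    k1 = k3 := by
  -- notation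
  set R1 : ℝ := ((2 ^ n * ∏ i, p i ^ k1 i : ℕ) : ℝ) with hR1
  set R2 : ℝ := ((2 ^ n * ∏ i, p i ^ k2 i : ℕ) : ℝ) with hR2
  set R3 : ℝ := ((2 ^ n * ∏ i, p i ^ k3 i : ℕ) : ℝ) with hR3
  set S1 : ℝ := ((∏ i, p i ^ (e i - k1 i) : ℕ) : ℝ) with hS1
  set S2 : ℝ := ((∏ i, p i ^ (e i - k2 i) : ℕ) : ℝ) with hS2
  set S3 : ℝ := ((∏ i, p i ^ (e i - k3 i) : ℕ) : ℝ) with hS3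
  -- the products r·s are all equal (to 2^n ∏ p^e), as naturals
  have hrs : ∀ a : Fin P → ℕ, (∀ i, a i ≤ e i) →
      (2 ^ n * ∏ i, p i ^ a i) * (∏ i, p i ^ (e i - a i)) = 2 ^ n * ∏ i, p i ^ e i := by
    intro a ha
    rw [mul_assoc, ← Finset.prod_mul_distrib]
    congr 1
    refine Finset.prod_congr rfl (fun i _ => ?_)
    rw [← pow_add, Nat.add_sub_cancel' (ha i)]
  have hC1 : R1 * S1 = ((2 ^ n * ∏ i, p i ^ e i : ℕ) : ℝ) := by
    rw [hR1, hS1, ← Nat.cast_mul, hrs k1 hk1]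
  have hC2 : R2 * S2 = ((2 ^ n * ∏ i, p i ^ e i : ℕ) : ℝ) := by
    rw [hR2, hS2, ← Nat.cast_mul, hrs k2 hk2]
  have hC3 : R3 * S3 = ((2 ^ n * ∏ i, p i ^ e i : ℕ) : ℝ) := by
    rw [hR3, hS3, ← Nat.cast_mul, hrs k3 hk3]
  -- r is injective as a function of k
  have hrinj : ∀ a b : Fin P → ℕ,
      (2 ^ n * ∏ i, p i ^ a i) = (2 ^ n * ∏ i, p i ^ b i) → a = b := by
    intro a b hab
    exact prod_pow_inj p hp hinj (Nat.eq_of_mul_eq_mul_left (pow_pos two_pos n) hab)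
  have hRpos : ∀ a : Fin P → ℕ, (0:ℝ) < ((2 ^ n * ∏ i, p i ^ a i : ℕ) : ℝ) := by
    intro a
    have : 0 < 2 ^ n * ∏ i, p i ^ a i :=
      Nat.mul_pos (pow_pos two_pos n)
        (Finset.prod_pos (fun i _ => pow_pos (hp i).pos _))
    exact_mod_cast this
  have h8t : (8 : ℝ) * t ≠ 0 := by
    simp [ht]
  -- from the Δ-equalities, extract square equalities
  rw [neg_div, neg_div] at hΔ12
  rw [neg_div, neg_div] at hΔ23
  have hsq12 : (R1 * t + S1) ^ 2 = (R2 * t + S2) ^ 2 := by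
    have h : (R1 * t + S1) ^ 2 / (8 * t) = (R2 * t + S2) ^ 2 / (8 * t) := by linarith
    rw [div_eq_div_iff h8t h8t] at h
    exact mul_right_cancel₀ h8t h
  have hsq23 : (R2 * t + S2) ^ 2 = (R3 * t + S3) ^ 2 := by
    have h : (R2 * t + S2) ^ 2 / (8 * t) = (R3 * t + S3) ^ 2 / (8 * t) := by linarith
    rw [div_eq_div_iff h8t h8t] at h
    exact mul_right_cancel₀ h8t h
  set C : ℝ := ((2 ^ n * ∏ i, p i ^ e i : ℕ) : ℝ) with hC
  -- key identities
  have key : ∀ Ra Rb Sa Sb : ℝ, 0 < Ra → 0 < Rb →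
      (Ra * t + Sa) ^ 2 = (Rb * t + Sb) ^ 2 →
      Ra * Sa = C → Rb * Sb = C → Ra ≠ Rb →
      Ra ^ 2 * Rb ^ 2 * t ^ 2 = C ^ 2 := by
    intro Ra Rb Sa Sb hRa hRb hsq ha hb hne
    have hz : (Ra ^ 2 - Rb ^ 2) * (Ra ^ 2 * Rb ^ 2 * t ^ 2 - C ^ 2) = 0 := by
      linear_combination (Ra ^ 2 * Rb ^ 2) * hsq +
        (Ra ^ 2 * (Rb * Sb + Ra * Sa) + 2 * Ra ^ 2 * Rb ^ 2 * t) * hb +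
        ((Ra ^ 2 - Rb ^ 2) * (Ra * Sa + C) - Ra ^ 2 * (Rb * Sb + Ra * Sa)
          - 2 * Ra ^ 2 * Rb ^ 2 * t) * ha
    rcases mul_eq_zero.1 hz with h | h
    · exfalso
      have h0 : (Ra - Rb) * (Ra + Rb) = 0 := by linear_combination h
      rcases mul_eq_zero.1 h0 with h1 | h1
      · exact hne (by linarith)
      · linarith
    · linarith
  have hne12 : R1 ≠ R2 := fun h => h12 (hrinj k1 k2 (Nat.cast_injective h))
  have hne23 : R2 ≠ R3 := fun h => h23 (hrinj k2 k3 (Nat.cast_injective h))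
  have hR1pos : (0:ℝ) < R1 := hRpos k1
  have hR2pos : (0:ℝ) < R2 := hRpos k2
  have hR3pos : (0:ℝ) < R3 := hRpos k3
  have key12 := key R1 R2 S1 S2 hR1pos hR2pos hsq12 hC1 hC2 hne12
  have key23 := key R2 R3 S2 S3 hR2pos hR3pos hsq23 hC2 hC3 hne23
  have hsq : R1 ^ 2 = R3 ^ 2 := by
    have ht2 : t ^ 2 ≠ 0 := pow_ne_zero _ ht
    have h : R1 ^ 2 * R2 ^ 2 * t ^ 2 = R2 ^ 2 * R3 ^ 2 * t ^ 2 := by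
      linear_combination key12 - key23
    have h2 : R1 ^ 2 * R2 ^ 2 = R2 ^ 2 * R3 ^ 2 := mul_right_cancel₀ ht2 h
    have hR2sq : R2 ^ 2 ≠ 0 := pow_ne_zero _ hR2pos.ne'
    have h3 : R1 ^ 2 * R2 ^ 2 = R3 ^ 2 * R2 ^ 2 := by rw [h2, mul_comm]
    exact mul_right_cancel₀ hR2sq h3
  have hR13 : R1 = R3 := by
    have h0 : (R1 - R3) * (R1 + R3) = 0 := by linear_combination hsq
    rcases mul_eq_zero.1 h0 with h1 | h1
    · linarith
    · linarith
  exact hrinj k1 k3 (Nat.cast_injective hR13)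
end

section
/- The determinant of the pair of coefficient vectors of two singular vectors at an intersection point vanishes if and only if ∏ p_i^{n_i−k_i^1} = ∏ p_i^{n_i−k_i^2}, which (since the p_i are distinct primes) holds if and only if π^1 = π^2. -/
lemma aux_prod_pow_inj {P : ℕ} (p : Fin P → ℕ) (hp : ∀ i, (p i).Prime)
    (hinj : Function.Injective p) (a b : Fin P → ℕ)
    (h : ∏ i, p i ^ a i = ∏ i, p i ^ b i) : a = b := by
  funext j
  have key : ∀ c : Fin P → ℕ, (∏ i, p i ^ c i).factorization (p j) = c j := by
    intro c
    rw [Nat.factorization_prod (fun i _ => pow_ne_zero _ (hp i).pos.ne')]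
    simp only [Nat.Prime.factorization_pow (hp _)]
    rw [Finsupp.finset_sum_apply, Finset.sum_eq_single j]
    · simp
    · intro i _ hij
      rw [Finsupp.single_apply, if_neg (fun h => hij (hinj h))]
    · simp
  have h2 := congrArg (fun m => m.factorization (p j)) h
  simpa [key] using h2

/-- The determinant of the two coefficient vectors at an intersection point
vanishes iff `∏ pᵢ^{nᵢ-kᵢ¹} = ∏ pᵢ^{nᵢ-kᵢ²}`, which holds iff `π¹ = π²`. -/
theorem stmt_6 (n P : ℕ) (p e : Fin P → ℕ)
    (hn : 1 ≤ n)
    (hp : ∀ i, (p i).Prime) (hodd : ∀ i, Odd (p i))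
    (hinj : Function.Injective p)
    (k1 k2 : Fin P → ℕ) (hk1 : ∀ i, k1 i ≤ e i) (hk2 : ∀ i, k2 i ≤ e i)
    (t : ℝ)
    (ht : t = ((2 : ℝ) ^ n)⁻¹ * ∏ i, (p i : ℝ) ^ ((e i : ℤ) - k1 i - k2 i)
      ∨ t = -(((2 : ℝ) ^ n)⁻¹ * ∏ i, (p i : ℝ) ^ ((e i : ℤ) - k1 i - k2 i))) :
    ((((2 ^ n * ∏ i, p i ^ k1 i : ℕ) : ℝ) * t
          + ((∏ i, p i ^ (e i - k1 i) : ℕ) : ℝ))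
        * (4 * ((2 ^ n * ∏ i, p i ^ k2 i : ℕ) : ℝ) * t)
      - (((2 ^ n * ∏ i, p i ^ k2 i : ℕ) : ℝ) * t
          + ((∏ i, p i ^ (e i - k2 i) : ℕ) : ℝ))
        * (4 * ((2 ^ n * ∏ i, p i ^ k1 i : ℕ) : ℝ) * t) = 0
      ↔ ∏ i, p i ^ (e i - k1 i) = ∏ i, p i ^ (e i - k2 i))
    ∧ ((∏ i, p i ^ (e i - k1 i) = ∏ i, p i ^ (e i - k2 i)) ↔ k1 = k2) := by
  have hiff2 : (∏ i, p i ^ (e i - k1 i) = ∏ i, p i ^ (e i - k2 i)) ↔ k1 = k2 := by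
    constructor
    · intro h
      have := aux_prod_pow_inj p hp hinj _ _ h
      funext i
      have h1 := hk1 i
      have h2 := hk2 i
      have h3 := congrFun this i
      omega
    · intro h; rw [h]
  refine ⟨?_, hiff2⟩
  -- t ≠ 0
  have htne : t ≠ 0 := by
    have h2 : ((2 : ℝ) ^ n)⁻¹ ≠ 0 := by positivity
    have hprod : (∏ i, (p i : ℝ) ^ ((e i : ℤ) - k1 i - k2 i)) ≠ 0 :=
      Finset.prod_ne_zero_iff.2 fun i _ =>
        zpow_ne_zero _ (Nat.cast_ne_zero.2 (hp i).pos.ne')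
    rcases ht with h | h <;> rw [h] <;> simp [h2, hprod]
  -- natural number identity
  have hnat : (2 ^ n * ∏ i, p i ^ k2 i) * ∏ i, p i ^ (e i - k1 i)
      = (2 ^ n * ∏ i, p i ^ k1 i) * ∏ i, p i ^ (e i - k2 i) ↔ k1 = k2 := by
    constructor
    · intro h
      have h2 : (∏ i, p i ^ k2 i) * ∏ i, p i ^ (e i - k1 i)
          = (∏ i, p i ^ k1 i) * ∏ i, p i ^ (e i - k2 i) := by
        have hpow : 0 < 2 ^ n := pow_pos (by norm_num) n
        rw [mul_assoc, mul_assoc] at h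
        exact Nat.eq_of_mul_eq_mul_left hpow h
      rw [← Finset.prod_mul_distrib, ← Finset.prod_mul_distrib] at h2
      simp only [← pow_add] at h2
      have := aux_prod_pow_inj p hp hinj _ _ h2
      funext i
      have h1 := hk1 i
      have h2' := hk2 i
      have h3 := congrFun this i
      omega
    · intro h; rw [h]
  constructor
  · intro h
    have h4 : (4 : ℝ) * t * (((2 ^ n * ∏ i, p i ^ k2 i : ℕ) : ℝ)
        * ((∏ i, p i ^ (e i - k1 i) : ℕ) : ℝ)
        - ((2 ^ n * ∏ i, p i ^ k1 i : ℕ) : ℝ)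
        * ((∏ i, p i ^ (e i - k2 i) : ℕ) : ℝ)) = 0 := by
      rw [← h]; ring
    have h5 : ((2 ^ n * ∏ i, p i ^ k2 i : ℕ) : ℝ)
        * ((∏ i, p i ^ (e i - k1 i) : ℕ) : ℝ)
        - ((2 ^ n * ∏ i, p i ^ k1 i : ℕ) : ℝ)
        * ((∏ i, p i ^ (e i - k2 i) : ℕ) : ℝ) = 0 := by
      rcases mul_eq_zero.1 h4 with h5 | h5
      · exfalso
        rcases mul_eq_zero.1 h5 with h6 | h6
        · norm_num at h6
        · exact htne h6
      · exact h5
    have h6 : ((2 ^ n * ∏ i, p i ^ k2 i : ℕ) : ℝ)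
        * ((∏ i, p i ^ (e i - k1 i) : ℕ) : ℝ)
        = ((2 ^ n * ∏ i, p i ^ k1 i : ℕ) : ℝ)
        * ((∏ i, p i ^ (e i - k2 i) : ℕ) : ℝ) := by linarith
    have h7 : (2 ^ n * ∏ i, p i ^ k2 i) * ∏ i, p i ^ (e i - k1 i)
        = (2 ^ n * ∏ i, p i ^ k1 i) * ∏ i, p i ^ (e i - k2 i) := by
      exact_mod_cast h6
    exact hiff2.2 (hnat.1 h7)
  · intro h
    have hk : k1 = k2 := hiff2.1 h
    subst hk
    ring
end
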